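/- On the open set where 1 + y ≠ 0, the function H₂(x,y) = (x² + y²)/(1 + y)² is a first integral of the quadratic system ẋ = -y + x², ẏ = x(1 + y); that is, (-y + x²)·∂H₂/∂x + x(1+y)·∂H₂/∂y = 0 wherever 1 + y ≠ 0. -/

import Mathlib

/-- On the set where `1 + y ≠ 0`, `H₂(x,y) = (x² + y²)/(1 + y)²` is a first
integral of `ẋ = -y + x²`, `ẏ = x(1 + y)`. -/
theorem stmt2 :
    ∀ x y : ℝ, 1 + y ≠ 0 →
      (-y + x^2) * deriv (fun x' : ℝ => (x'^2 + y^2) / (1 + y)^2) x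
        + x * (1 + y) * deriv (fun y' : ℝ => (x^2 + y'^2) / (1 + y')^2) y
        = 0 := by
  intro x y hy
  have hne : (1 + y)^2 ≠ 0 := pow_ne_zero _ hy
  have h1 : HasDerivAt (fun x' : ℝ => (x'^2 + y^2) / (1 + y)^2)
      ((2 * x) / (1 + y)^2) x := by
    have : HasDerivAt (fun x' : ℝ => x'^2 + y^2) (2 * x) x := by
      simpa using ((hasDerivAt_pow 2 x).add_const (y^2))
    exact this.div_const _
  have h2 : HasDerivAt (fun y' : ℝ => (x^2 + y'^2) / (1 + y')^2)
      ((2 * y * (1 + y)^2 - (x^2 + y^2) * (2 * (1 + y))) / ((1 + y)^2)^2) y := by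
    have hnum : HasDerivAt (fun y' : ℝ => x^2 + y'^2) (2 * y) y := by
      simpa using ((hasDerivAt_pow 2 y).const_add (x^2))
    have hden : HasDerivAt (fun y' : ℝ => (1 + y')^2) (2 * (1 + y)) y := by
      have h := ((hasDerivAt_id y).const_add 1).pow 2
      simpa [mul_comm, Pi.pow_def] using h
    exact hnum.div hden hne
  rw [h1.deriv, h2.deriv]
  field_simp
  ring
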